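/- Fix b, h > 0 and 0 < λ < 1 ≤ M, and let ρ = b/(b+h). For every Borel measurable policy π : ℝ^N → [0, M] acting on N censored samples, the supremum over demand distributions G ∈ 𝒢 with |G⁻(λ) − ρ| ≤ √(1−ρ)/(4·√N) of E_{D_1,…,D_N i.i.d. ∼ G}[ Regret_G(π(min(D_1,λ), …, min(D_N,λ))) − Δ_G ] is at least λ·(b+h)·√(1−ρ)·min(ρ, 1−ρ)·e^{−1/2} / (32·√N). -/

import Mathlib

open MeasureTheory Set

/-- Newsvendor cost of ordering quantity `q` under demand distribution `F`,
with underage cost `b` and overage cost `h`. -/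
noncomputable def nvCost (b h : ℝ) (F : Measure ℝ) (q : ℝ) : ℝ :=
  ∫ x, (b * max (x - q) 0 + h * max (q - x) 0) ∂F

/-- Optimal newsvendor quantity: the `ρ`-th quantile of `F`. -/
noncomputable def qStar (ρ : ℝ) (F : Measure ℝ) : ℝ :=
  sInf {q : ℝ | ρ ≤ (F (Iic q)).toReal}

/-- The set `𝒢` of admissible demand distributions: Borel probability measures on ℝ
supported on `[0, ∞)` with finite mean and optimal newsvendor quantity at most `M`. -/
def GoodDist (ρ M : ℝ) : Set (Measure ℝ) :=
  {F | IsProbabilityMeasure F ∧ F (Iio 0) = 0 ∧ Integrable id F ∧ qStar ρ F ≤ M}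

/-- The ambiguity set `𝒜_λ`: all admissible distributions agreeing with `G` before `lam`. -/
def Ambig (ρ M : ℝ) (G : Measure ℝ) (lam : ℝ) : Set (Measure ℝ) :=
  {F | F ∈ GoodDist ρ M ∧ ∀ x < lam, F (Iic x) = G (Iic x)}

/-- Worst-case regret of an ordering quantity `q` over the ambiguity set. -/
noncomputable def Regret (b h ρ M : ℝ) (G : Measure ℝ) (lam q : ℝ) : ℝ :=
  sSup ((fun F => nvCost b h F q - nvCost b h F (qStar ρ F)) '' Ambig ρ M G lam)

/-- Minimax risk `Δ`. -/
noncomputable def Risk (b h ρ M : ℝ) (G : Measure ℝ) (lam : ℝ) : ℝ :=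
  sInf (Regret b h ρ M G lam '' Icc 0 M)

/-- The unidentifiable ordering quantity `q†_G`. -/
noncomputable def qDagger (b h M : ℝ) (G : Measure ℝ) (lam : ℝ) : ℝ :=
  (b * M + h * lam - (b + h) * (G (Iio lam)).toReal * M) /
    ((b + h) * (1 - (G (Iio lam)).toReal))

/-- The two-point-tail distribution `F_p`: agrees with `G` on `[0, λ)`, places an atom
of mass `p` at `λ` and an atom of mass `1 - p - G⁻(λ)` at `M`. -/
noncomputable def Fp (G : Measure ℝ) (lam M p : ℝ) : Measure ℝ :=
  G.restrict (Iio lam) + ENNReal.ofReal p • Measure.dirac lam +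
    ENNReal.ofReal (1 - p - (G (Iio lam)).toReal) • Measure.dirac M

/-- The `N`-fold product (i.i.d.) measure of `G` (equal to `Measure.pi` whenever `G`
is sigma-finite, in particular for probability measures). -/
noncomputable def iidPi (N : ℕ) (G : Measure ℝ) : Measure (Fin N → ℝ) := by
  classical
  exact if h : SigmaFinite G then
    haveI := h
    Measure.pi fun _ => G
  else 0

namespace Stmt18aux

/-- cost integrand -/
noncomputable def cf (b h q x : ℝ) : ℝ := b * max (x - q) 0 + h * max (q - x) 0

lemma nvCost_eq (b h : ℝ) (F : Measure ℝ) (q : ℝ) :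
    nvCost b h F q = ∫ x, cf b h q x ∂F := rfl

lemma cf_cont (b h q : ℝ) : Continuous (cf b h q) := by
  unfold cf
  exact (continuous_const.mul ((continuous_id.sub continuous_const).max continuous_const)).add
    (continuous_const.mul ((continuous_const.sub continuous_id).max continuous_const))

lemma cf_nonneg {b h : ℝ} (hb : 0 ≤ b) (hh : 0 ≤ h) (q x : ℝ) : 0 ≤ cf b h q x := by
  unfold cf; positivity

lemma cf_of_le {b h x q : ℝ} (hxq : x ≤ q) : cf b h q x = h * (q - x) := by
  unfold cf
  rw [max_eq_right (by linarith), max_eq_left (by linarith)]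
  ring

lemma cf_of_ge {b h x q : ℝ} (hqx : q ≤ x) : cf b h q x = b * (x - q) := by
  unfold cf
  rw [max_eq_left (by linarith), max_eq_right (by linarith)]
  ring

lemma cf_abs_le {b h : ℝ} (hb : 0 ≤ b) (hh : 0 ≤ h) (q x : ℝ) :
    |cf b h q x| ≤ (b + h) * (|x| + |q|) := by
  rw [abs_of_nonneg (cf_nonneg hb hh q x)]
  unfold cf
  have h1 : max (x - q) 0 ≤ |x| + |q| := by
    apply max_le _ (by positivity)
    calc x - q ≤ |x - q| := le_abs_self _
      _ ≤ |x| + |q| := abs_sub _ _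
  have h2 : max (q - x) 0 ≤ |x| + |q| := by
    apply max_le _ (by positivity)
    calc q - x ≤ |q - x| := le_abs_self _
      _ ≤ |q| + |x| := abs_sub _ _
    linarith
  nlinarith [abs_nonneg x, abs_nonneg q]

lemma integrable_cf {b h : ℝ} (hb : 0 ≤ b) (hh : 0 ≤ h) {F : Measure ℝ}
    [IsFiniteMeasure F] (hI : Integrable id F) (q : ℝ) : Integrable (cf b h q) F := by
  have hg : Integrable (fun x => (b + h) * (|x| + |q|)) F :=
    (hI.abs.add (integrable_const _)).const_mul _
  refine hg.mono' ((cf_cont b h q).aestronglyMeasurable) ?_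
  filter_upwards with x
  rw [Real.norm_eq_abs]
  exact cf_abs_le hb hh q x

lemma cf_sub_abs_le {b h : ℝ} (hb : 0 ≤ b) (hh : 0 ≤ h) (q q' x : ℝ) :
    |cf b h q x - cf b h q' x| ≤ (b + h) * |q - q'| := by
  have h1 : |max (x - q) 0 - max (x - q') 0| ≤ |q - q'| := by
    have := abs_max_sub_max_le_abs (x - q) (x - q') 0
    calc |max (x - q) 0 - max (x - q') 0| ≤ |(x - q) - (x - q')| := this
      _ = |q - q'| := by rw [abs_sub_comm]; ring_nf
  have h2 : |max (q - x) 0 - max (q' - x) 0| ≤ |q - q'| := by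
    have := abs_max_sub_max_le_abs (q - x) (q' - x) 0
    calc |max (q - x) 0 - max (q' - x) 0| ≤ |(q - x) - (q' - x)| := this
      _ = |q - q'| := by ring_nf
  have : cf b h q x - cf b h q' x
      = b * (max (x - q) 0 - max (x - q') 0) + h * (max (q - x) 0 - max (q' - x) 0) := by
    unfold cf; ring
  rw [this]
  calc |b * (max (x - q) 0 - max (x - q') 0) + h * (max (q - x) 0 - max (q' - x) 0)|
      ≤ |b * (max (x - q) 0 - max (x - q') 0)| + |h * (max (q - x) 0 - max (q' - x) 0)| :=
        abs_add_le _ _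
    _ = b * |max (x - q) 0 - max (x - q') 0| + h * |max (q - x) 0 - max (q' - x) 0| := by
        rw [abs_mul, abs_mul, abs_of_nonneg hb, abs_of_nonneg hh]
    _ ≤ b * |q - q'| + h * |q - q'| := by
        gcongr
    _ = (b + h) * |q - q'| := by ring

lemma nvCost_sub_eq {b h : ℝ} (hb : 0 ≤ b) (hh : 0 ≤ h) {F : Measure ℝ}
    [IsFiniteMeasure F] (hI : Integrable id F) (q q' : ℝ) :
    nvCost b h F q - nvCost b h F q' = ∫ x, (cf b h q x - cf b h q' x) ∂F := by
  rw [nvCost_eq, nvCost_eq, ← integral_sub (integrable_cf hb hh hI q) (integrable_cf hb hh hI q')]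

lemma nvCost_lip {b h : ℝ} (hb : 0 ≤ b) (hh : 0 ≤ h) {F : Measure ℝ}
    [IsProbabilityMeasure F] (hI : Integrable id F) (q q' : ℝ) :
    |nvCost b h F q - nvCost b h F q'| ≤ (b + h) * |q - q'| := by
  rw [nvCost_sub_eq hb hh hI]
  have h1 : |∫ x, (cf b h q x - cf b h q' x) ∂F| ≤ ∫ x, |cf b h q x - cf b h q' x| ∂F := by
    simpa [Real.norm_eq_abs] using
      norm_integral_le_integral_norm (fun x => cf b h q x - cf b h q' x) (μ := F)
  refine h1.trans ?_
  have h2 : ∫ x, |cf b h q x - cf b h q' x| ∂F ≤ ∫ _x, (b + h) * |q - q'| ∂F := by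
    apply integral_mono ((integrable_cf hb hh hI q).sub (integrable_cf hb hh hI q')).abs
      (integrable_const _)
    intro x
    exact cf_sub_abs_le hb hh q q' x
  simpa using h2

lemma qStar_nonneg {ρ : ℝ} (hρ : 0 < ρ) {F : Measure ℝ} (h0 : F (Iio 0) = 0) :
    0 ≤ qStar ρ F := by
  apply Real.sInf_nonneg
  intro q hq
  by_contra hq0
  push_neg at hq0
  have : F (Iic q) = 0 := measure_mono_null (fun x hx => lt_of_le_of_lt hx hq0) h0
  rw [Set.mem_setOf_eq, this] at hq
  simp at hq
  linarith

lemma diff_abs_bound {b h ρ M : ℝ} (hb : 0 ≤ b) (hh : 0 ≤ h) (hρ : 0 < ρ)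
    {F : Measure ℝ} (hF : F ∈ GoodDist ρ M) {q : ℝ} (hq : q ∈ Icc 0 M) :
    |nvCost b h F q - nvCost b h F (qStar ρ F)| ≤ (b + h) * M := by
  obtain ⟨hP, h0, hI, hqs⟩ := hF
  haveI := hP
  refine (nvCost_lip hb hh hI q _).trans ?_
  have h1 : 0 ≤ qStar ρ F := qStar_nonneg hρ h0
  have h2 : |q - qStar ρ F| ≤ M := by
    rw [abs_le]; constructor <;> [linarith [hq.1]; linarith [hq.2]]
  have hM : 0 ≤ M := le_trans h1 hqs
  nlinarith


section RegretRisk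

variable {b h ρ M lam : ℝ} {G : Measure ℝ}

lemma diffset_bddAbove (hb : 0 ≤ b) (hh : 0 ≤ h) (hρ : 0 < ρ) {q : ℝ} (hq : q ∈ Icc 0 M) :
    BddAbove ((fun F => nvCost b h F q - nvCost b h F (qStar ρ F)) '' Ambig ρ M G lam) := by
  refine ⟨(b + h) * M, ?_⟩
  rintro r ⟨F, hF, rfl⟩
  exact le_of_abs_le (diff_abs_bound hb hh hρ hF.1 hq)

lemma regret_le (hb : 0 ≤ b) (hh : 0 ≤ h) (hρ : 0 < ρ) {q : ℝ} (hq : q ∈ Icc 0 M) :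
    Regret b h ρ M G lam q ≤ (b + h) * M := by
  have hM : 0 ≤ M := hq.1.trans hq.2
  refine Real.sSup_le ?_ (by positivity)
  rintro r ⟨F, hF, rfl⟩
  exact le_of_abs_le (diff_abs_bound hb hh hρ hF.1 hq)

lemma regret_ge_elt (hb : 0 ≤ b) (hh : 0 ≤ h) (hρ : 0 < ρ) {q : ℝ} (hq : q ∈ Icc 0 M)
    {F : Measure ℝ} (hF : F ∈ Ambig ρ M G lam) :
    nvCost b h F q - nvCost b h F (qStar ρ F) ≤ Regret b h ρ M G lam q :=
  le_csSup (diffset_bddAbove hb hh hρ hq) (Set.mem_image_of_mem _ hF)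

lemma regret_ge (hb : 0 ≤ b) (hh : 0 ≤ h) (hρ : 0 < ρ) {q : ℝ} (hq : q ∈ Icc 0 M) :
    -((b + h) * M) ≤ Regret b h ρ M G lam q := by
  have hM : 0 ≤ M := hq.1.trans hq.2
  rcases (Ambig ρ M G lam).eq_empty_or_nonempty with hemp | ⟨F, hF⟩
  · rw [Regret, hemp, Set.image_empty, Real.sSup_empty]
    have : 0 ≤ (b + h) * M := by positivity
    linarith
  · refine le_trans ?_ (regret_ge_elt hb hh hρ hq hF)
    exact neg_le_of_abs_le (diff_abs_bound hb hh hρ hF.1 hq)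

lemma risk_ge (hb : 0 ≤ b) (hh : 0 ≤ h) (hρ : 0 < ρ) (hM : 0 ≤ M) :
    -((b + h) * M) ≤ Risk b h ρ M G lam := by
  refine le_csInf ⟨Regret b h ρ M G lam 0, Set.mem_image_of_mem _ (by constructor <;> simp [hM])⟩ ?_
  rintro r ⟨q, hq, rfl⟩
  exact regret_ge hb hh hρ hq

lemma risk_le (hb : 0 ≤ b) (hh : 0 ≤ h) (hρ : 0 < ρ) {q : ℝ} (hq : q ∈ Icc 0 M) :
    Risk b h ρ M G lam ≤ Regret b h ρ M G lam q := by
  refine csInf_le ⟨-((b + h) * M), ?_⟩ (Set.mem_image_of_mem _ hq)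
  rintro r ⟨q', hq', rfl⟩
  exact regret_ge hb hh hρ hq'

end RegretRisk

section TwoPoint

/-- two-point measure -/
noncomputable def tp (p a c : ℝ) : Measure ℝ :=
  ENNReal.ofReal p • Measure.dirac a + ENNReal.ofReal (1 - p) • Measure.dirac c

lemma tp_apply (p a c : ℝ) (s : Set ℝ) :
    tp p a c s = ENNReal.ofReal p * s.indicator 1 a + ENNReal.ofReal (1 - p) * s.indicator 1 c := by
  rw [tp, Measure.add_apply, Measure.smul_apply, Measure.smul_apply,
    Measure.dirac_apply, Measure.dirac_apply, smul_eq_mul, smul_eq_mul]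

lemma tp_prob {p : ℝ} (hp0 : 0 ≤ p) (hp1 : p ≤ 1) (a c : ℝ) :
    IsProbabilityMeasure (tp p a c) := by
  constructor
  rw [tp_apply]
  simp only [Set.indicator_of_mem (Set.mem_univ _), Pi.one_apply, mul_one]
  rw [← ENNReal.ofReal_add hp0 (by linarith)]
  norm_num

lemma tp_Iio0 {a c : ℝ} (ha : 0 ≤ a) (hc : 0 ≤ c) (p : ℝ) : tp p a c (Iio 0) = 0 := by
  rw [tp_apply]
  rw [Set.indicator_of_notMem (by simpa using ha), Set.indicator_of_notMem (by simpa using hc)]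
  simp

lemma integrable_dirac_any {α : Type*} [MeasurableSpace α] [MeasurableSingletonClass α]
    (f : α → ℝ) (a : α) : Integrable f (Measure.dirac a) := by
  have hae : f =ᵐ[Measure.dirac a] fun _ => f a := by
    rw [Filter.EventuallyEq, ae_iff]
    have h1 : {x | ¬ f x = f a} ⊆ {a}ᶜ := by
      intro x hx hxa
      simp only [Set.mem_singleton_iff] at hxa
      exact hx (by rw [hxa])
    have h2 : Measure.dirac a ({a}ᶜ : Set α) = 0 := by
      rw [Measure.dirac_apply]
      simp
    exact measure_mono_null h1 h2
  exact (integrable_const (f a)).congr hae.symm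

lemma integrable_tp (f : ℝ → ℝ) (p a c : ℝ) : Integrable f (tp p a c) := by
  rw [tp, integrable_add_measure]
  exact ⟨(integrable_dirac_any f a).smul_measure ENNReal.ofReal_ne_top,
    (integrable_dirac_any f c).smul_measure ENNReal.ofReal_ne_top⟩

lemma tp_integral {p : ℝ} (hp0 : 0 ≤ p) (hp1 : p ≤ 1) (a c : ℝ) (f : ℝ → ℝ) :
    ∫ x, f x ∂(tp p a c) = p * f a + (1 - p) * f c := by
  rw [tp, integral_add_measure
      ((integrable_dirac_any f a).smul_measure ENNReal.ofReal_ne_top)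
      ((integrable_dirac_any f c).smul_measure ENNReal.ofReal_ne_top),
    integral_smul_measure, integral_smul_measure, integral_dirac, integral_dirac,
    ENNReal.toReal_ofReal hp0, ENNReal.toReal_ofReal (by linarith)]
  simp [smul_eq_mul]

lemma tp_Iic_toReal {p : ℝ} (hp0 : 0 ≤ p) (hp1 : p ≤ 1) (a c x : ℝ) :
    ((tp p a c) (Iic x)).toReal
      = (if a ≤ x then p else 0) + (if c ≤ x then 1 - p else 0) := by
  have hind : ∀ (s : Set ℝ) (y : ℝ), s.indicator (1 : ℝ → ENNReal) y ≠ ⊤ := by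
    intro s y; by_cases hy : y ∈ s <;> simp [hy]
  rw [tp_apply]
  rw [ENNReal.toReal_add (ENNReal.mul_ne_top ENNReal.ofReal_ne_top (hind _ _))
    (ENNReal.mul_ne_top ENNReal.ofReal_ne_top (hind _ _))]
  congr 1
  · by_cases hax : a ≤ x
    · rw [Set.indicator_of_mem (by simpa using hax), if_pos hax]
      simp [ENNReal.toReal_ofReal hp0]
    · rw [Set.indicator_of_notMem (by simpa using hax), if_neg hax]
      simp
  · by_cases hcx : c ≤ x
    · rw [Set.indicator_of_mem (by simpa using hcx), if_pos hcx]
      simp [ENNReal.toReal_ofReal (by linarith : (0:ℝ) ≤ 1 - p)]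
    · rw [Set.indicator_of_notMem (by simpa using hcx), if_neg hcx]
      simp

lemma qStar_tp_high {ρ p a c : ℝ} (hρ0 : 0 < ρ) (hρ1 : ρ ≤ 1) (hρp : ρ ≤ p) (hp1 : p ≤ 1)
    (hac : a < c) : qStar ρ (tp p a c) = a := by
  have hp0 : 0 ≤ p := le_trans (le_of_lt hρ0) hρp
  have hset : {q : ℝ | ρ ≤ ((tp p a c) (Iic q)).toReal} = Ici a := by
    ext q
    rw [Set.mem_setOf_eq, tp_Iic_toReal hp0 hp1, Set.mem_Ici]
    constructor
    · intro hq
      by_contra hqa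
      push_neg at hqa
      rw [if_neg (by linarith), if_neg (by linarith)] at hq
      norm_num at hq
      linarith
    · intro haq
      rw [if_pos haq]
      by_cases hcq : c ≤ q
      · rw [if_pos hcq]; linarith
      · rw [if_neg hcq]; linarith
  rw [qStar, hset, csInf_Ici]

lemma qStar_tp_low {ρ p a c : ℝ} (hρ0 : 0 < ρ) (hρ1 : ρ ≤ 1) (hpρ : p < ρ) (hp0 : 0 ≤ p)
    (hac : a < c) : qStar ρ (tp p a c) = c := by
  have hp1 : p ≤ 1 := by linarith
  have hset : {q : ℝ | ρ ≤ ((tp p a c) (Iic q)).toReal} = Ici c := by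
    ext q
    rw [Set.mem_setOf_eq, tp_Iic_toReal hp0 hp1, Set.mem_Ici]
    constructor
    · intro hq
      by_contra hqc
      push_neg at hqc
      split_ifs at hq <;> linarith
    · intro hcq
      rw [if_pos hcq, if_pos (by linarith)]
      linarith
  rw [qStar, hset, csInf_Ici]

lemma nvCost_tp {p : ℝ} (hp0 : 0 ≤ p) (hp1 : p ≤ 1) (b h a c q : ℝ) :
    nvCost b h (tp p a c) q = p * cf b h q a + (1 - p) * cf b h q c := by
  rw [nvCost_eq, tp_integral hp0 hp1]

end TwoPoint


section ProductMeasure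

open Classical in
lemma pi_tp_eq (N : ℕ) {p : ℝ} (hp0 : 0 ≤ p) (hp1 : p ≤ 1) (a c : ℝ) :
    (Measure.pi fun _ : Fin N => tp p a c) =
      ∑ v : Fin N → Bool,
        (∏ i, (if v i then ENNReal.ofReal p else ENNReal.ofReal (1 - p))) •
          Measure.dirac (fun i => if v i then a else c) := by
  haveI := tp_prob hp0 hp1 a c
  refine Measure.pi_eq (fun s hs => ?_)
  rw [Measure.finset_sum_apply]
  simp only [Measure.smul_apply, smul_eq_mul]
  refine Eq.symm ?_
  have hdir : ∀ v : Fin N → Bool,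
      Measure.dirac (fun i => if v i then a else c) (univ.pi s)
        = ∏ i, (s i).indicator (1 : ℝ → ENNReal) (if v i then a else c) := by
    intro v
    rw [Measure.dirac_apply]
    by_cases hv : ∀ i, (if v i then a else c) ∈ s i
    · rw [Set.indicator_of_mem (Set.mem_univ_pi.2 hv)]
      rw [Finset.prod_eq_one]
      · rfl
      · intro i _
        rw [Set.indicator_of_mem (hv i)]; rfl
    · push_neg at hv
      obtain ⟨i, hi⟩ := hv
      rw [Set.indicator_of_notMem (fun hmem => hi (Set.mem_univ_pi.1 hmem i))]
      rw [Finset.prod_eq_zero (Finset.mem_univ i)]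
      rw [Set.indicator_of_notMem hi]
  calc ∏ i, (tp p a c) (s i)
      = ∏ i : Fin N, ∑ bb : Bool,
          (if bb then ENNReal.ofReal p else ENNReal.ofReal (1 - p))
            * (s i).indicator (1 : ℝ → ENNReal) (if bb then a else c) := by
        refine Finset.prod_congr rfl (fun i _ => ?_)
        rw [Fintype.sum_bool]
        norm_num
        rw [tp_apply]
    _ = ∑ v : Fin N → Bool, ∏ i,
          (if v i then ENNReal.ofReal p else ENNReal.ofReal (1 - p))
            * (s i).indicator (1 : ℝ → ENNReal) (if v i then a else c) := by
        rw [Finset.prod_univ_sum]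
        rw [Fintype.piFinset_univ]
    _ = ∑ v : Fin N → Bool,
          (∏ i, (if v i then ENNReal.ofReal p else ENNReal.ofReal (1 - p))) *
            Measure.dirac (fun i => if v i then a else c) (univ.pi s) := by
        refine Finset.sum_congr rfl (fun v _ => ?_)
        rw [hdir v, Finset.prod_mul_distrib]

lemma integral_pi_tp (N : ℕ) {p : ℝ} (hp0 : 0 ≤ p) (hp1 : p ≤ 1) (a c : ℝ)
    (f : (Fin N → ℝ) → ℝ) :
    ∫ d, f d ∂(Measure.pi fun _ : Fin N => tp p a c)
      = ∑ v : Fin N → Bool,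
          (∏ i, (if v i then p else 1 - p)) * f (fun i => if v i then a else c) := by
  haveI := tp_prob hp0 hp1 a c
  rw [pi_tp_eq N hp0 hp1 a c]
  rw [integral_finset_sum_measure (fun v _ =>
    (integrable_dirac_any f _).smul_measure (by
      exact ENNReal.prod_ne_top (fun i _ => by split_ifs <;> exact ENNReal.ofReal_ne_top)))]
  refine Finset.sum_congr rfl (fun v _ => ?_)
  rw [integral_smul_measure, integral_dirac, ENNReal.toReal_prod, smul_eq_mul]
  congr 1
  refine Finset.prod_congr rfl (fun i _ => ?_)
  split_ifs
  · exact ENNReal.toReal_ofReal hp0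
  · exact ENNReal.toReal_ofReal (by linarith)

lemma sum_prod_bool (N : ℕ) (r t : ℝ) :
    ∑ v : Fin N → Bool, (∏ i, (if v i then r else t)) = (r + t) ^ N := by
  classical
  have h1 : ∏ i : Fin N, ∑ bb : Bool, (if bb then r else t)
      = ∑ v : Fin N → Bool, ∏ i, (if v i then r else t) := by
    rw [Finset.prod_univ_sum, Fintype.piFinset_univ]
  rw [← h1]
  have h2 : ∀ i : Fin N, (∑ bb : Bool, (if bb then r else t)) = r + t := by
    intro i; rw [Fintype.sum_bool]; simp
  rw [Finset.prod_congr rfl (fun i _ => h2 i), Finset.prod_const, Finset.card_univ,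
    Fintype.card_fin]

lemma iidPi_eq_pi {N : ℕ} (G : Measure ℝ) (hG : SigmaFinite G) :
    iidPi N G = Measure.pi fun _ => G := by
  unfold iidPi
  rw [dif_pos hG]

end ProductMeasure


section Scenario

lemma qset_nonempty {ρ : ℝ} (hρ0 : 0 ≤ ρ) (hρ1 : ρ < 1) (F : Measure ℝ)
    [IsProbabilityMeasure F] : {q : ℝ | ρ ≤ (F (Iic q)).toReal}.Nonempty := by
  by_contra hemp
  rw [Set.not_nonempty_iff_eq_empty, Set.eq_empty_iff_forall_notMem] at hemp
  have hlt : ∀ q : ℝ, F (Iic q) ≤ ENNReal.ofReal ρ := by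
    intro q
    have := hemp q
    rw [Set.mem_setOf_eq, not_le] at this
    exact (ENNReal.le_ofReal_iff_toReal_le (measure_ne_top F _) hρ0).2 this.le
  have huniv : (univ : Set ℝ) = ⋃ n : ℕ, Iic (n : ℝ) := by
    ext x
    simp only [Set.mem_univ, Set.mem_iUnion, Set.mem_Iic, true_iff]
    exact exists_nat_ge x
  have hdir : Directed (fun x1 x2 : Set ℝ => x1 ⊆ x2) (fun n : ℕ => Iic (n : ℝ)) := by
    intro m n
    exact ⟨max m n, Iic_subset_Iic.2 (by exact_mod_cast le_max_left m n),
      Iic_subset_Iic.2 (by exact_mod_cast le_max_right m n)⟩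
  have h1 : (1 : ENNReal) = F univ := (measure_univ).symm
  rw [huniv, hdir.measure_iUnion] at h1
  have h2 : (1 : ENNReal) ≤ ENNReal.ofReal ρ := by
    rw [h1]
    exact iSup_le fun n => hlt n
  rw [ENNReal.one_le_ofReal] at h2
  linarith

lemma ambig_Iic_small {ρ M lam p x0 t : ℝ} (hx0lam : x0 < lam) (hlamt : lam ≤ t)
    {F : Measure ℝ} (hF : F ∈ Ambig ρ M (tp p x0 t) lam) {x : ℝ} (hx : x < lam) :
    F (Iic x) = if x0 ≤ x then ENNReal.ofReal p else 0 := by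
  rw [hF.2 x hx, tp_apply]
  have hnt : t ∉ Iic x := by simp only [Set.mem_Iic, not_le]; linarith
  rw [Set.indicator_of_notMem hnt]
  by_cases hax : x0 ≤ x
  · rw [Set.indicator_of_mem (by simpa using hax), if_pos hax]
    simp
  · rw [Set.indicator_of_notMem (by simpa using hax), if_neg hax]
    simp

lemma qStar_of_ambig_high {ρ M lam p x0 : ℝ} (hρ0 : 0 < ρ) (hρp : ρ ≤ p)
    (hx0lam : x0 < lam) (hlamM : lam ≤ M)
    {F : Measure ℝ} (hF : F ∈ Ambig ρ M (tp p x0 M) lam) : qStar ρ F = x0 := by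
  have hp0 : 0 ≤ p := le_trans hρ0.le hρp
  have hmem : x0 ∈ {q : ℝ | ρ ≤ (F (Iic q)).toReal} := by
    rw [Set.mem_setOf_eq, ambig_Iic_small hx0lam hlamM hF (lt_of_lt_of_le hx0lam (le_refl lam)),
      if_pos le_rfl, ENNReal.toReal_ofReal hp0]
    exact hρp
  have hlb : ∀ q ∈ {q : ℝ | ρ ≤ (F (Iic q)).toReal}, x0 ≤ q := by
    intro q hq
    by_contra hqx
    push_neg at hqx
    rw [Set.mem_setOf_eq, ambig_Iic_small hx0lam hlamM hF (by linarith),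
      if_neg (by linarith)] at hq
    simp at hq
    linarith
  rw [qStar]
  exact le_antisymm (csInf_le ⟨x0, hlb⟩ hmem) (le_csInf ⟨x0, hmem⟩ hlb)

lemma qStar_of_ambig_low_ge {ρ M lam p x0 : ℝ} (hρ0 : 0 < ρ) (hρ1 : ρ < 1) (hpρ : p < ρ)
    (hp0 : 0 ≤ p) (hx0lam : x0 < lam) (hlamM : lam ≤ M)
    {F : Measure ℝ} (hF : F ∈ Ambig ρ M (tp p x0 M) lam) : lam ≤ qStar ρ F := by
  haveI := hF.1.1
  have hlb : ∀ q ∈ {q : ℝ | ρ ≤ (F (Iic q)).toReal}, lam ≤ q := by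
    intro q hq
    by_contra hql
    push_neg at hql
    rw [Set.mem_setOf_eq, ambig_Iic_small hx0lam hlamM hF hql] at hq
    split_ifs at hq
    · rw [ENNReal.toReal_ofReal hp0] at hq; linarith
    · simp at hq; linarith
  rw [qStar]
  exact le_csInf (qset_nonempty hρ0.le hρ1 F) hlb

lemma tp_mem_good {ρ M p x0 t : ℝ} (hp0 : 0 ≤ p) (hp1 : p ≤ 1) (hx00 : 0 ≤ x0)
    (ht0 : 0 ≤ t) (hq : qStar ρ (tp p x0 t) ≤ M) : tp p x0 t ∈ GoodDist ρ M :=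
  ⟨tp_prob hp0 hp1 x0 t, tp_Iio0 hx00 ht0 p, integrable_tp id p x0 t, hq⟩

lemma tp_mem_ambig {ρ M lam p x0 t : ℝ} (hp0 : 0 ≤ p) (hp1 : p ≤ 1) (hx00 : 0 ≤ x0)
    (hx0lam : x0 < lam) (hlamt : lam ≤ t) (hq : qStar ρ (tp p x0 t) ≤ M) (hlamM : lam ≤ M) :
    tp p x0 t ∈ Ambig ρ M (tp p x0 M) lam := by
  refine ⟨tp_mem_good hp0 hp1 hx00 (by linarith [hx0lam]) hq, fun x hx => ?_⟩
  rw [tp_apply, tp_apply]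
  have h1 : t ∉ Iic x := by simp only [Set.mem_Iic, not_le]; linarith
  have h2 : M ∉ Iic x := by simp only [Set.mem_Iic, not_le]; linarith
  rw [Set.indicator_of_notMem h1, Set.indicator_of_notMem h2]

lemma cf_right_le {b h : ℝ} (hb : 0 ≤ b) (hh : 0 ≤ h) {q q' : ℝ} (hqq : q' ≤ q) (x : ℝ) :
    cf b h q x - cf b h q' x ≤ h * (q - q') := by
  rcases le_total x q' with h1 | h1
  · rw [cf_of_le (h1.trans hqq), cf_of_le h1]
    nlinarith
  · rcases le_total x q with h2 | h2
    · rw [cf_of_le h2, cf_of_ge h1]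
      nlinarith
    · rw [cf_of_ge h2, cf_of_ge h1]
      nlinarith

lemma sqrt_helper {u d : ℝ} (hu : 0 < u) (hd : 0 ≤ d) (hdu : d ≤ 4 * u) :
    u + d - d ^ 2 / (2 * u) ≤ Real.sqrt ((u + 2 * d) * u) := by
  rcases le_or_gt (u + d - d ^ 2 / (2 * u)) 0 with hneg | hpos
  · exact hneg.trans (Real.sqrt_nonneg _)
  · rw [Real.le_sqrt hpos.le (by nlinarith)]
    have ht2 : d ^ 2 / (2 * u) ≤ 2 * d := by
      rw [div_le_iff₀ (by positivity)]
      nlinarith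
    have h2ut : 2 * u * (d ^ 2 / (2 * u)) = d ^ 2 := by
      field_simp
    nlinarith [sq_nonneg (d ^ 2 / (2 * u)), ht2, h2ut, hd, hu.le,
      mul_nonneg hd (sub_nonneg.2 ht2)]

lemma exp_le_one_sub {x : ℝ} (hx0 : 0 ≤ x) (hx : x ≤ 1 / 2) :
    Real.exp (-(2 * x)) ≤ 1 - x := by
  have h1 : 1 + 2 * x ≤ Real.exp (2 * x) := by linarith [Real.add_one_le_exp (2 * x)]
  rw [Real.exp_neg, inv_le_iff_one_le_mul₀ (Real.exp_pos _)]
  nlinarith [Real.exp_pos (2 * x)]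


section RegretFormulas

variable {b h lam M ρ p x0 : ℝ}

/-- context packaging -/
structure Ctx (b h lam M ρ x0 : ℝ) : Prop where
  hb : 0 < b
  hh : 0 < h
  hρb : ρ * (b + h) = b
  hρ0 : 0 < ρ
  hρ1 : ρ < 1
  hx00 : 0 < x0
  hx0lam : x0 < lam
  hlam1 : lam < 1
  hM : 1 ≤ M

namespace Ctx

variable (C : Ctx b h lam M ρ x0)
include C

lemma hbh : 0 < b + h := by linarith [C.hb, C.hh]
lemma hlamM : lam ≤ M := by linarith [C.hlam1, C.hM]
lemma hx0M : x0 < M := by linarith [C.hx0lam, C.hlamM]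
lemma hM0 : 0 < M := by linarith [C.hM]

lemma good_high (hρp : ρ ≤ p) (hp1 : p ≤ 1) : tp p x0 M ∈ GoodDist ρ M := by
  refine tp_mem_good (le_trans C.hρ0.le hρp) hp1 C.hx00.le (by linarith [C.hM]) ?_
  rw [qStar_tp_high C.hρ0 C.hρ1.le hρp hp1 C.hx0M]
  linarith [C.hx0lam, C.hlamM]

lemma good_low (hpρ : p < ρ) (hp0 : 0 ≤ p) : tp p x0 M ∈ GoodDist ρ M := by
  refine tp_mem_good hp0 (by linarith [C.hρ1]) C.hx00.le (by linarith [C.hM]) ?_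
  rw [qStar_tp_low C.hρ0 C.hρ1.le hpρ hp0 C.hx0M]

lemma ambig_self_high (hρp : ρ ≤ p) (hp1 : p ≤ 1) :
    tp p x0 M ∈ Ambig ρ M (tp p x0 M) lam :=
  ⟨C.good_high hρp hp1, fun x _ => rfl⟩

lemma ambig_self_low (hpρ : p < ρ) (hp0 : 0 ≤ p) :
    tp p x0 M ∈ Ambig ρ M (tp p x0 M) lam :=
  ⟨C.good_low hpρ hp0, fun x _ => rfl⟩

lemma ambig_lam_high (hρp : ρ ≤ p) (hp1 : p ≤ 1) :
    tp p x0 lam ∈ Ambig ρ M (tp p x0 M) lam := by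
  refine tp_mem_ambig (le_trans C.hρ0.le hρp) hp1 C.hx00.le C.hx0lam le_rfl ?_ C.hlamM
  rw [qStar_tp_high C.hρ0 C.hρ1.le hρp hp1 C.hx0lam]
  linarith [C.hx0lam, C.hlamM]

lemma ambig_lam_low (hpρ : p < ρ) (hp0 : 0 ≤ p) :
    tp p x0 lam ∈ Ambig ρ M (tp p x0 M) lam := by
  refine tp_mem_ambig hp0 (by linarith [C.hρ1]) C.hx00.le C.hx0lam le_rfl ?_ C.hlamM
  rw [qStar_tp_low C.hρ0 C.hρ1.le hpρ hp0 C.hx0lam]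
  exact C.hlamM

/-- Regret lower bound, high mass, q below x0. -/
lemma RH0 (hρp : ρ ≤ p) (hp1 : p ≤ 1) {q : ℝ} (hq0 : 0 ≤ q) (hqx0 : q ≤ x0) :
    b * (x0 - q) ≤ Regret b h ρ M (tp p x0 M) lam q := by
  have hp0 : 0 ≤ p := le_trans C.hρ0.le hρp
  have hqM : q ∈ Icc 0 M := ⟨hq0, by linarith [C.hx0M]⟩
  refine le_trans (le_of_eq ?_) (regret_ge_elt C.hb.le C.hh.le C.hρ0 hqM (C.ambig_self_high hρp hp1))
  rw [qStar_tp_high C.hρ0 C.hρ1.le hρp hp1 C.hx0M, nvCost_tp hp0 hp1, nvCost_tp hp0 hp1,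
    cf_of_ge hqx0, cf_of_ge (le_of_lt (lt_of_le_of_lt hqx0 C.hx0M)), cf_of_ge (le_refl x0),
    cf_of_ge C.hx0M.le]
  ring

/-- Regret lower bound, high mass, q in [x0, lam]. -/
lemma RH1 (hρp : ρ ≤ p) (hp1 : p ≤ 1) {q : ℝ} (hqx0 : x0 ≤ q) (hqlam : q ≤ lam) :
    (b + h) * (p - ρ) * (q - x0) ≤ Regret b h ρ M (tp p x0 M) lam q := by
  have hp0 : 0 ≤ p := le_trans C.hρ0.le hρp
  have hqM : q ∈ Icc 0 M := ⟨by linarith [C.hx00], by linarith [C.hlamM]⟩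
  refine le_trans (le_of_eq ?_) (regret_ge_elt C.hb.le C.hh.le C.hρ0 hqM (C.ambig_self_high hρp hp1))
  rw [qStar_tp_high C.hρ0 C.hρ1.le hρp hp1 C.hx0M, nvCost_tp hp0 hp1, nvCost_tp hp0 hp1,
    cf_of_le hqx0, cf_of_ge (by linarith [C.hlamM] : q ≤ M), cf_of_le (le_refl x0),
    cf_of_ge C.hx0M.le]
  linear_combination (x0 - q) * C.hρb

/-- Regret lower bound, high mass, q ≥ lam. -/
lemma RH2 (hρp : ρ ≤ p) (hp1 : p ≤ 1) {q : ℝ} (hqlam : lam ≤ q) (hqM : q ≤ M) :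
    (b + h) * (p - ρ) * (lam - x0) ≤ Regret b h ρ M (tp p x0 M) lam q := by
  have hp0 : 0 ≤ p := le_trans C.hρ0.le hρp
  have hqM' : q ∈ Icc 0 M := ⟨by linarith [C.hx00, C.hx0lam], hqM⟩
  refine le_trans ?_ (regret_ge_elt C.hb.le C.hh.le C.hρ0 hqM' (C.ambig_lam_high hρp hp1))
  rw [qStar_tp_high C.hρ0 C.hρ1.le hρp hp1 C.hx0lam, nvCost_tp hp0 hp1, nvCost_tp hp0 hp1,
    cf_of_le (by linarith [C.hx0lam] : x0 ≤ q), cf_of_le hqlam, cf_of_le (le_refl x0),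
    cf_of_ge C.hx0lam.le]
  have hkey : p * (h * (q - x0)) + (1 - p) * (h * (q - lam))
      - (p * (h * (x0 - x0)) + (1 - p) * (b * (lam - x0)))
      = (b + h) * (p - ρ) * (lam - x0) + h * (q - lam) := by
    linear_combination (lam - x0) * C.hρb
  rw [hkey]
  nlinarith [mul_nonneg C.hh.le (by linarith : (0:ℝ) ≤ q - lam)]

/-- Regret lower bound, low mass, witness with tail at M. -/
lemma RL_M (hpρ : p < ρ) (hp0 : 0 ≤ p) (hsb : (b + h) * (ρ - p) ≤ b)
    {q : ℝ} (hq0 : 0 ≤ q) (hqM : q ≤ M) :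
    (b + h) * (ρ - p) * (M - q) ≤ Regret b h ρ M (tp p x0 M) lam q := by
  have hp1 : p ≤ 1 := by linarith [C.hρ1]
  have hqM' : q ∈ Icc 0 M := ⟨hq0, hqM⟩
  refine le_trans ?_ (regret_ge_elt C.hb.le C.hh.le C.hρ0 hqM' (C.ambig_self_low hpρ hp0))
  rw [qStar_tp_low C.hρ0 C.hρ1.le hpρ hp0 C.hx0M, nvCost_tp hp0 hp1, nvCost_tp hp0 hp1,
    cf_of_le C.hx0M.le, cf_of_ge (le_refl M)]
  rcases le_total x0 q with hx0q | hx0q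
  · rw [cf_of_le hx0q, cf_of_ge hqM]
    nlinarith [C.hρb]
  · rw [cf_of_ge hx0q, cf_of_ge hqM]
    nlinarith [C.hρb, mul_nonneg (sub_nonneg.2 hsb) (by linarith : (0:ℝ) ≤ x0 - q)]

/-- Regret lower bound, low mass, witness with tail at lam. -/
lemma RL_lam (hpρ : p < ρ) (hp0 : 0 ≤ p) {q : ℝ} (hqlam : lam ≤ q) (hqM : q ≤ M) :
    h * (q - lam) ≤ Regret b h ρ M (tp p x0 M) lam q := by
  have hp1 : p ≤ 1 := by linarith [C.hρ1]
  have hqM' : q ∈ Icc 0 M := ⟨by linarith [C.hx00, C.hx0lam], hqM⟩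
  refine le_trans (le_of_eq ?_) (regret_ge_elt C.hb.le C.hh.le C.hρ0 hqM' (C.ambig_lam_low hpρ hp0))
  rw [qStar_tp_low C.hρ0 C.hρ1.le hpρ hp0 C.hx0lam, nvCost_tp hp0 hp1, nvCost_tp hp0 hp1,
    cf_of_le (by linarith [C.hx0lam] : x0 ≤ q), cf_of_le hqlam, cf_of_le C.hx0lam.le,
    cf_of_le (le_refl lam)]
  ring

/-- Risk upper bound for the high-mass measure. -/
lemma riskHigh (hρp : ρ ≤ p) (hp1 : p ≤ 1) :
    Risk b h ρ M (tp p x0 M) lam ≤ 0 := by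
  have hx0M : x0 ∈ Icc 0 M := ⟨C.hx00.le, C.hx0M.le⟩
  refine le_trans (risk_le C.hb.le C.hh.le C.hρ0 hx0M) ?_
  refine Real.sSup_le ?_ le_rfl
  rintro r ⟨F, hF, rfl⟩
  dsimp only
  rw [qStar_of_ambig_high C.hρ0 hρp C.hx0lam C.hlamM hF]
  simp

/-- Risk upper bound for the low-mass measure. -/
lemma riskLow (hpρ : p < ρ) (hp0 : 0 ≤ p) {qbar V : ℝ}
    (hqbar1 : lam ≤ qbar) (hqbar2 : qbar ≤ M)
    (hV1 : V = h * (qbar - lam)) (hV2 : V = (b + h) * (ρ - p) * (M - qbar)) :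
    Risk b h ρ M (tp p x0 M) lam ≤ V := by
  have hqbarM : qbar ∈ Icc 0 M := ⟨by linarith [C.hx00, C.hx0lam], hqbar2⟩
  refine le_trans (risk_le C.hb.le C.hh.le C.hρ0 hqbarM) ?_
  refine Real.sSup_le ?_ (by rw [hV1]; nlinarith [C.hh.le])
  rintro r ⟨F, hF, rfl⟩
  dsimp only
  have hP := hF.1.1
  have h0 := hF.1.2.1
  have hI := hF.1.2.2.1
  have hqM := hF.1.2.2.2
  haveI := hP
  have hqs_lam : lam ≤ qStar ρ F :=
    qStar_of_ambig_low_ge C.hρ0 C.hρ1 hpρ hp0 C.hx0lam C.hlamM hF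
  set qs := qStar ρ F with hqs
  rcases le_total qs qbar with hcase | hcase
  · -- qs ≤ qbar : diff ≤ h (qbar - qs) ≤ V
    rw [nvCost_sub_eq C.hb.le C.hh.le hI]
    have hptw : ∀ x, cf b h qbar x - cf b h qs x ≤ h * (qbar - qs) :=
      fun x => cf_right_le C.hb.le C.hh.le hcase x
    have hint : ∫ x, (cf b h qbar x - cf b h qs x) ∂F ≤ ∫ _x, h * (qbar - qs) ∂F := by
      exact integral_mono ((integrable_cf C.hb.le C.hh.le hI qbar).sub
        (integrable_cf C.hb.le C.hh.le hI qs)) (integrable_const _) hptw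
    refine hint.trans ?_
    simp only [integral_const, measure_univ, ENNReal.toReal_one, smul_eq_mul, one_mul, measureReal_def]
    rw [hV1]
    nlinarith [C.hh.le]
  · -- qbar ≤ qs : diff ≤ (b+h)(ρ-p)(qs - qbar) ≤ V
    rw [nvCost_sub_eq C.hb.le C.hh.le hI]
    set φ : ℝ → ℝ := fun x =>
      b * (qs - qbar) - Set.indicator (Iic qbar) (fun _ => (b + h) * (qs - qbar)) x with hφ
    have hptw : ∀ x, cf b h qbar x - cf b h qs x ≤ φ x := by
      intro x
      rcases le_or_gt x qbar with hx | hx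
      · rw [hφ]
        simp only [Set.indicator_of_mem (Set.mem_Iic.2 hx)]
        rw [cf_of_le hx, cf_of_le (by linarith : x ≤ qs)]
        ring_nf
        nlinarith []
      · rw [hφ]
        have hxmem : x ∉ Iic qbar := by simp only [Set.mem_Iic, not_le]; exact hx
        simp only [Set.indicator_of_notMem hxmem]
        rw [cf_of_ge hx.le]
        have hcfqs : b * (x - qs) ≤ cf b h qs x := by
          unfold cf
          nlinarith [le_max_left (x - qs) (0:ℝ), le_max_right (qs - x) (0:ℝ),
            mul_le_mul_of_nonneg_left (le_max_left (x - qs) (0:ℝ)) C.hb.le,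
            mul_nonneg C.hh.le (le_max_right (qs - x) (0:ℝ))]
        nlinarith [hcfqs]
    have hφint : Integrable φ F := by
      rw [hφ]
      exact (integrable_const _).sub ((integrable_const _).indicator measurableSet_Iic)
    have hint : ∫ x, (cf b h qbar x - cf b h qs x) ∂F ≤ ∫ x, φ x ∂F :=
      integral_mono ((integrable_cf C.hb.le C.hh.le hI qbar).sub
        (integrable_cf C.hb.le C.hh.le hI qs)) hφint hptw
    refine hint.trans ?_
    have hφval : ∫ x, φ x ∂F
        = b * (qs - qbar) - (F (Iic qbar)).toReal * ((b + h) * (qs - qbar)) := by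
      rw [hφ]
      rw [integral_sub (integrable_const _) ((integrable_const _).indicator measurableSet_Iic)]
      rw [integral_const, integral_indicator_const _ measurableSet_Iic]
      simp [measure_univ, measureReal_def]
    rw [hφval]
    -- F (Iic qbar) ≥ p
    have hFp : p ≤ (F (Iic qbar)).toReal := by
      have h1 : F (Iic x0) = ENNReal.ofReal p := by
        rw [ambig_Iic_small C.hx0lam C.hlamM hF C.hx0lam, if_pos le_rfl]
      have h2 : F (Iic x0) ≤ F (Iic qbar) :=
        measure_mono (Iic_subset_Iic.2 (by linarith [C.hx0lam]))
      have h3 := ENNReal.toReal_mono (measure_ne_top F _) h2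
      rw [h1, ENNReal.toReal_ofReal hp0] at h3
      exact h3
    have hqsM : qs ≤ M := hqM
    rw [hV2]
    nlinarith [C.hρb, hFp, mul_le_mul_of_nonneg_left hFp
      (by nlinarith [C.hbh] : (0:ℝ) ≤ (b + h) * (qs - qbar)),
      mul_nonneg (by nlinarith [C.hρb, C.hbh, hpρ] : (0:ℝ) ≤ (b+h)*(ρ - p))
        (by linarith : (0:ℝ) ≤ M - qs)]

end Ctx

end RegretFormulas

end Scenario

end Stmt18aux

set_option maxHeartbeats 1000000 in
open Stmt18aux in
/-- lower bound in the knife-edge regime. -/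
theorem stmt18 (b h M lam ρ : ℝ) (hb : 0 < b) (hh : 0 < h)
    (hlam0 : 0 < lam) (hlam1 : lam < 1) (hM : 1 ≤ M)
    (hρ : ρ = b / (b + h)) (N : ℕ) (hN : 1 ≤ N)
    (π : (Fin N → ℝ) → ℝ) (hmeas : Measurable π) (hrange : ∀ d, π d ∈ Icc (0 : ℝ) M) :
    lam * (b + h) * Real.sqrt (1 - ρ) * min ρ (1 - ρ) * Real.exp (-(1 / 2 : ℝ)) /
        (32 * Real.sqrt (N : ℝ)) ≤
      sSup {r : ℝ | ∃ G ∈ GoodDist ρ M,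
        |(G (Iio lam)).toReal - ρ| ≤ Real.sqrt (1 - ρ) / (4 * Real.sqrt (N : ℝ)) ∧
        r = ∫ d, (Regret b h ρ M G lam (π fun i => min (d i) lam)
                    - Risk b h ρ M G lam) ∂(iidPi N G)} := by
  classical
  have hbh : 0 < b + h := by linarith
  have hρ0 : 0 < ρ := by rw [hρ]; positivity
  have hρ1 : ρ < 1 := by rw [hρ, div_lt_one hbh]; linarith
  have hρb : ρ * (b + h) = b := by rw [hρ]; field_simp
  set x0 : ℝ := lam / 2 with hx0def
  have C : Ctx b h lam M ρ x0 := ⟨hb, hh, hρb, hρ0, hρ1, by linarith, by linarith, hlam1, hM⟩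
  have h1ρ0 : 0 < 1 - ρ := by linarith
  set sr := Real.sqrt (1 - ρ) with hsrdef
  have hsr0 : 0 < sr := Real.sqrt_pos.2 h1ρ0
  have hsr1 : sr ≤ 1 := Real.sqrt_le_one.2 (by linarith)
  have hsrsq : sr ^ 2 = 1 - ρ := Real.sq_sqrt h1ρ0.le
  set sqN := Real.sqrt (N : ℝ) with hsqNdef
  have hN1 : (1 : ℝ) ≤ (N : ℝ) := by exact_mod_cast hN
  have hsqN1 : 1 ≤ sqN := Real.one_le_sqrt.2 hN1
  have hsqN0 : 0 < sqN := by linarith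
  have hsqNsq : sqN ^ 2 = (N : ℝ) := Real.sq_sqrt (by positivity)
  set mn := min ρ (1 - ρ) with hmndef
  have hmn0 : 0 < mn := lt_min hρ0 h1ρ0
  have hmnρ : mn ≤ ρ := min_le_left _ _
  have hmn1ρ : mn ≤ 1 - ρ := min_le_right _ _
  have hmnhalf : mn ≤ 1 / 2 := by linarith
  set δ := sr * mn / (4 * sqN) with hδdef
  have hδ0 : 0 < δ := by positivity
  have hδmn : δ ≤ mn / 4 := by
    rw [hδdef, div_le_div_iff₀ (by positivity) (by positivity)]
    nlinarith [hsr1, hsqN1, hmn0.le]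
  have hδρ : δ ≤ ρ / 4 := by linarith
  have hδ1ρ : δ ≤ (1 - ρ) / 4 := by linarith
  have hδmax : δ ≤ sr / (4 * sqN) := by
    rw [hδdef, div_le_div_iff₀ (by positivity) (by positivity)]
    nlinarith [mul_pos hsr0 hsqN0, hmnhalf]
  have hδsq : δ ^ 2 * (16 * (N : ℝ)) = (1 - ρ) * mn ^ 2 := by
    have h1 : (4 * sqN) ^ 2 = 16 * (N : ℝ) := by rw [mul_pow, hsqNsq]; norm_num
    calc δ ^ 2 * (16 * (N : ℝ)) = (sr * mn) ^ 2 / (4 * sqN) ^ 2 * (4 * sqN) ^ 2 := by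
          rw [hδdef, div_pow, h1]
      _ = (sr * mn) ^ 2 := div_mul_cancel₀ _ (by positivity)
      _ = (1 - ρ) * mn ^ 2 := by rw [mul_pow, hsrsq]
  set pP := ρ + δ with hpPdef
  set pM := ρ - δ with hpMdef
  have hpM0 : 0 < pM := by rw [hpMdef]; linarith
  have hpM34 : 3 * ρ / 4 ≤ pM := by rw [hpMdef]; linarith
  have hpP1 : pP ≤ 1 := by rw [hpPdef]; linarith
  have h1pP : 3 * (1 - ρ) / 4 ≤ 1 - pP := by rw [hpPdef]; linarith
  have h1pP0 : 0 < 1 - pP := by linarith [h1pP]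
  have hpPρ : ρ ≤ pP := by rw [hpPdef]; linarith
  have hpMρ : pM < ρ := by rw [hpMdef]; linarith
  have hpP0 : 0 ≤ pP := by linarith [hρ0, hpPρ]
  have hpM1 : pM ≤ 1 := by linarith [hpMρ]
  set s := (b + h) * δ with hsdef
  have hs0 : 0 < s := by positivity
  have hsP : (b + h) * (pP - ρ) = s := by rw [hpPdef, hsdef]; ring
  have hsM : (b + h) * (ρ - pM) = s := by rw [hpMdef, hsdef]; ring
  have hsb : s ≤ b := by
    have h1 : (b + h) * δ ≤ (b + h) * (ρ / 4) := by
      exact mul_le_mul_of_nonneg_left hδρ hbh.le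
    have h2 : (b + h) * (ρ / 4) = b / 4 := by linear_combination hρb / 4
    linarith
  set qbar := lam + s * (M - lam) / (h + s) with hqbardef
  have hhs0 : 0 < h + s := by linarith
  have hMlam0 : 0 ≤ M - lam := by linarith [C.hlamM]
  have hqbar1 : lam ≤ qbar := by
    rw [hqbardef]
    have : 0 ≤ s * (M - lam) / (h + s) := by positivity
    linarith
  have hqbar2 : qbar ≤ M := by
    rw [hqbardef]
    have h1 : s * (M - lam) / (h + s) ≤ M - lam := by
      rw [div_le_iff₀ hhs0]
      have := mul_le_mul_of_nonneg_right (by linarith only [hh] : s ≤ h + s) hMlam0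
      linarith only [this]
    linarith
  set V := h * (qbar - lam) with hVdef
  have hV2 : V = s * (M - qbar) := by
    rw [hVdef, hqbardef]
    field_simp
    ring
  have hV2' : V = (b + h) * (ρ - pM) * (M - qbar) := by rw [hV2, hsM]
  have hV0 : 0 ≤ V := by
    rw [hVdef]; exact mul_nonneg hh.le (by linarith only [hqbar1])
  have hVle : V ≤ s * (M - lam) := by
    rw [hV2]; exact mul_le_mul_of_nonneg_left (by linarith only [hqbar1]) hs0.le
  -- Regret function bounds
  have hApos : ∀ q ∈ Icc (0:ℝ) M, 0 ≤ Regret b h ρ M (tp pP x0 M) lam q := by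
    intro q hq
    rcases le_total q x0 with h1 | h1
    · exact le_trans (mul_nonneg hb.le (by linarith only [h1])) (C.RH0 hpPρ hpP1 hq.1 h1)
    · rcases le_total q lam with h2 | h2
      · refine le_trans ?_ (C.RH1 hpPρ hpP1 h1 h2)
        exact mul_nonneg (mul_nonneg hbh.le (by linarith only [hpPρ])) (by linarith only [h1])
      · refine le_trans ?_ (C.RH2 hpPρ hpP1 h2 hq.2)
        have hx0lam : x0 < lam := C.hx0lam
        exact mul_nonneg (mul_nonneg hbh.le (by linarith only [hpPρ]))
          (by linarith only [hx0lam])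
  have hBV : ∀ q ∈ Icc (0:ℝ) M, V ≤ Regret b h ρ M (tp pM x0 M) lam q := by
    intro q hq
    rcases le_total q qbar with h1 | h1
    · refine le_trans ?_ (C.RL_M hpMρ hpM0.le (by rw [hsM]; exact hsb) hq.1 hq.2)
      rw [hV2, hsM]
      exact mul_le_mul_of_nonneg_left (by linarith only [h1]) hs0.le
    · refine le_trans ?_ (C.RL_lam hpMρ hpM0.le (le_trans hqbar1 h1) hq.2)
      rw [hVdef]
      exact mul_le_mul_of_nonneg_left (by linarith only [h1]) hh.le
  have hkey : ∀ q ∈ Icc (0:ℝ) M, s * lam / 2 + V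
      ≤ Regret b h ρ M (tp pP x0 M) lam q + Regret b h ρ M (tp pM x0 M) lam q := by
    intro q hq
    have hx0lam : x0 < lam := C.hx0lam
    have hx0eq : x0 = lam / 2 := hx0def
    rcases le_total q x0 with h1 | h1
    · have hBq := C.RL_M hpMρ hpM0.le (by rw [hsM]; exact hsb) hq.1 hq.2
      have hAq := hApos q hq
      rw [hsM] at hBq
      have e1 : s * (lam / 2) ≤ s * (lam - q) :=
        mul_le_mul_of_nonneg_left (by linarith only [h1, hx0eq]) hs0.le
      have e2 : s * (M - q) = s * (M - lam) + s * (lam - q) := by ring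
      linarith only [hAq, hBq, hVle, e1, e2]
    · rcases le_total q lam with h2 | h2
      · have hAq := C.RH1 hpPρ hpP1 h1 h2
        have hBq := C.RL_M hpMρ hpM0.le (by rw [hsM]; exact hsb) hq.1 hq.2
        rw [hsM] at hBq
        rw [hsP] at hAq
        have e2 : s * (M - q) = s * (M - lam) + s * (lam - q) := by ring
        have e3 : s * (q - x0) + s * (lam - q) = s * (lam / 2) := by rw [hx0eq]; ring
        linarith only [hAq, hBq, hVle, e2, e3]
      · have hAq := C.RH2 hpPρ hpP1 h2 hq.2
        have hBq := hBV q hq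
        rw [hsP] at hAq
        have e4 : s * (lam - x0) = s * (lam / 2) := by rw [hx0eq]; ring
        linarith only [hAq, hBq, e4]
  have hRP : Risk b h ρ M (tp pP x0 M) lam ≤ 0 := C.riskHigh hpPρ hpP1
  have hRM : Risk b h ρ M (tp pM x0 M) lam ≤ V :=
    C.riskLow hpMρ hpM0.le hqbar1 hqbar2 hVdef hV2'
  -- probability instances
  haveI hGPprob : IsProbabilityMeasure (tp pP x0 M) := tp_prob hpP0 hpP1 x0 M
  haveI hGMprob : IsProbabilityMeasure (tp pM x0 M) := tp_prob hpM0.le hpM1 x0 M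
  -- names for the two expected excess risks
  set RP := Risk b h ρ M (tp pP x0 M) lam with hRPdef
  set RM := Risk b h ρ M (tp pM x0 M) lam with hRMdef
  set EP := ∫ d, (Regret b h ρ M (tp pP x0 M) lam (π fun i => min (d i) lam)
      - Risk b h ρ M (tp pP x0 M) lam) ∂(iidPi N (tp pP x0 M)) with hEPdef
  set EM := ∫ d, (Regret b h ρ M (tp pM x0 M) lam (π fun i => min (d i) lam)
      - Risk b h ρ M (tp pM x0 M) lam) ∂(iidPi N (tp pM x0 M)) with hEMdef
  -- evaluate the integrals as finite sums
  have hfun : ∀ v : Fin N → Bool,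
      (fun i => min ((fun j => if v j then x0 else M) i) lam)
        = (fun i => if v i then x0 else lam) := by
    intro v
    funext i
    dsimp only
    by_cases hvi : v i
    · rw [if_pos hvi, if_pos hvi]
      exact min_eq_left (by linarith [C.hx0lam])
    · rw [if_neg hvi, if_neg hvi]
      exact min_eq_right C.hlamM
  have hEPsum : EP = ∑ v : Fin N → Bool, (∏ i, (if v i then pP else 1 - pP)) *
      (Regret b h ρ M (tp pP x0 M) lam (π fun i => if v i then x0 else lam) - RP) := by
    rw [hEPdef, iidPi_eq_pi _ inferInstance,
      integral_pi_tp N hpP0 hpP1 x0 M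
        (fun d => Regret b h ρ M (tp pP x0 M) lam (π fun i => min (d i) lam)
          - Risk b h ρ M (tp pP x0 M) lam)]
    refine Finset.sum_congr rfl (fun v _ => ?_)
    congr 2
    exact congrArg (Regret b h ρ M (tp pP x0 M) lam) (congrArg π (hfun v))
  have hEMsum : EM = ∑ v : Fin N → Bool, (∏ i, (if v i then pM else 1 - pM)) *
      (Regret b h ρ M (tp pM x0 M) lam (π fun i => if v i then x0 else lam) - RM) := by
    rw [hEMdef, iidPi_eq_pi _ inferInstance,
      integral_pi_tp N hpM0.le hpM1 x0 M
        (fun d => Regret b h ρ M (tp pM x0 M) lam (π fun i => min (d i) lam)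
          - Risk b h ρ M (tp pM x0 M) lam)]
    refine Finset.sum_congr rfl (fun v _ => ?_)
    congr 2
    exact congrArg (Regret b h ρ M (tp pM x0 M) lam) (congrArg π (hfun v))
  -- weights
  set ωP : (Fin N → Bool) → ℝ := fun v => ∏ i, (if v i then pP else 1 - pP) with hωPdef
  set ωM : (Fin N → Bool) → ℝ := fun v => ∏ i, (if v i then pM else 1 - pM) with hωMdef
  have hωP0 : ∀ v, 0 ≤ ωP v := fun v =>
    Finset.prod_nonneg (fun i _ => by split_ifs <;> linarith only [hpP0, hpP1])
  have hωM0 : ∀ v, 0 ≤ ωM v := fun v =>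
    Finset.prod_nonneg (fun i _ => by split_ifs <;> linarith only [hpM0, hpM1])
  -- per-term inequality
  have hterm : ∀ v : Fin N → Bool,
      min (ωP v) (ωM v) * (s * lam / 2)
        ≤ ωP v * (Regret b h ρ M (tp pP x0 M) lam (π fun i => if v i then x0 else lam) - RP)
          + ωM v * (Regret b h ρ M (tp pM x0 M) lam (π fun i => if v i then x0 else lam) - RM) := by
    intro v
    set qv := π (fun i => if v i then x0 else lam) with hqv
    have hqIcc : qv ∈ Icc (0:ℝ) M := hrange _
    have h1 : 0 ≤ Regret b h ρ M (tp pP x0 M) lam qv := hApos qv hqIcc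
    have h2 : V ≤ Regret b h ρ M (tp pM x0 M) lam qv := hBV qv hqIcc
    have h3 : s * lam / 2 + V
        ≤ Regret b h ρ M (tp pP x0 M) lam qv + Regret b h ρ M (tp pM x0 M) lam qv :=
      hkey qv hqIcc
    have hm0 : 0 ≤ min (ωP v) (ωM v) := le_min (hωP0 v) (hωM0 v)
    have hmP : min (ωP v) (ωM v) ≤ ωP v := min_le_left _ _
    have hmM : min (ωP v) (ωM v) ≤ ωM v := min_le_right _ _
    set Aq := Regret b h ρ M (tp pP x0 M) lam qv
    set Bq := Regret b h ρ M (tp pM x0 M) lam qv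
    have e1 : ωP v * Aq ≤ ωP v * (Aq - RP) :=
      mul_le_mul_of_nonneg_left (by linarith only [hRP]) (hωP0 v)
    have e2 : min (ωP v) (ωM v) * Aq ≤ ωP v * Aq := mul_le_mul_of_nonneg_right hmP h1
    have e3 : ωM v * (Bq - V) ≤ ωM v * (Bq - RM) :=
      mul_le_mul_of_nonneg_left (by linarith only [hRM]) (hωM0 v)
    have e4 : min (ωP v) (ωM v) * (Bq - V) ≤ ωM v * (Bq - V) :=
      mul_le_mul_of_nonneg_right hmM (by linarith only [h2])
    have e5 : min (ωP v) (ωM v) * (s * lam / 2)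
        ≤ min (ωP v) (ωM v) * (Aq + (Bq - V)) :=
      mul_le_mul_of_nonneg_left (by linarith only [h3]) hm0
    have e6 : min (ωP v) (ωM v) * (Aq + (Bq - V))
        = min (ωP v) (ωM v) * Aq + min (ωP v) (ωM v) * (Bq - V) := by ring
    linarith only [e1, e2, e3, e4, e5, e6]
  have hsum1 : (∑ v : Fin N → Bool, min (ωP v) (ωM v)) * (s * lam / 2) ≤ EP + EM := by
    rw [hEPsum, hEMsum, ← Finset.sum_add_distrib, Finset.sum_mul]
    exact Finset.sum_le_sum (fun v _ => hterm v)
  -- Bhattacharyya / Cauchy-Schwarz lower bound on the min-sum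
  set mPc := Real.sqrt (pP * pM) with hmPcdef
  set mQc := Real.sqrt ((1 - pP) * (1 - pM)) with hmQcdef
  have hmPc0 : 0 ≤ mPc := Real.sqrt_nonneg _
  have hmQc0 : 0 ≤ mQc := Real.sqrt_nonneg _
  have hsqrtprod : ∀ v : Fin N → Bool,
      Real.sqrt (ωP v * ωM v) = ∏ i, (if v i then mPc else mQc) := by
    intro v
    have hprod : ωP v * ωM v = (∏ i, (if v i then mPc else mQc)) ^ 2 := by
      rw [← Finset.prod_pow, hωPdef, hωMdef]
      dsimp only
      rw [← Finset.prod_mul_distrib]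
      refine Finset.prod_congr rfl (fun i _ => ?_)
      split_ifs with hvi
      · rw [hmPcdef, Real.sq_sqrt (by positivity)]
      · rw [hmQcdef, Real.sq_sqrt (mul_nonneg (by linarith only [hpP1]) (by linarith only [hpM1]))]
    rw [hprod, Real.sqrt_sq (Finset.prod_nonneg (fun i _ => by
      split_ifs
      · exact hmPc0
      · exact hmQc0))]
  have hT : ∑ v : Fin N → Bool, Real.sqrt (ωP v * ωM v) = (mPc + mQc) ^ N := by
    rw [Finset.sum_congr rfl (fun v _ => hsqrtprod v)]
    exact sum_prod_bool N mPc mQc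
  have hsumP1 : ∑ v : Fin N → Bool, ωP v = 1 := by
    rw [hωPdef]
    dsimp only
    rw [sum_prod_bool N pP (1 - pP), show pP + (1 - pP) = 1 by ring, one_pow]
  have hsumM1 : ∑ v : Fin N → Bool, ωM v = 1 := by
    rw [hωMdef]
    dsimp only
    rw [sum_prod_bool N pM (1 - pM), show pM + (1 - pM) = 1 by ring, one_pow]
  have hCS : ((mPc + mQc) ^ N) ^ 2 ≤ (∑ v : Fin N → Bool, min (ωP v) (ωM v)) * 2 := by
    have h2 : ∀ v : Fin N → Bool, Real.sqrt (ωP v * ωM v)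
        = Real.sqrt (min (ωP v) (ωM v)) * Real.sqrt (max (ωP v) (ωM v)) := by
      intro v
      rw [← Real.sqrt_mul (le_min (hωP0 v) (hωM0 v)), min_mul_max]
    have h1 := Finset.sum_mul_sq_le_sq_mul_sq Finset.univ
      (fun v : Fin N → Bool => Real.sqrt (min (ωP v) (ωM v)))
      (fun v : Fin N → Bool => Real.sqrt (max (ωP v) (ωM v)))
    have h3 : ∀ v : Fin N → Bool, Real.sqrt (min (ωP v) (ωM v)) ^ 2 = min (ωP v) (ωM v) :=
      fun v => Real.sq_sqrt (le_min (hωP0 v) (hωM0 v))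
    have h4 : ∀ v : Fin N → Bool, Real.sqrt (max (ωP v) (ωM v)) ^ 2 = max (ωP v) (ωM v) :=
      fun v => Real.sq_sqrt (le_trans (hωP0 v) (le_max_left _ _))
    have h5 : ∑ v : Fin N → Bool, max (ωP v) (ωM v) ≤ 2 := by
      calc ∑ v : Fin N → Bool, max (ωP v) (ωM v)
          ≤ ∑ v : Fin N → Bool, (ωP v + ωM v) :=
            Finset.sum_le_sum (fun v _ => max_le_add_of_nonneg (hωP0 v) (hωM0 v))
        _ = (∑ v : Fin N → Bool, ωP v) + ∑ v : Fin N → Bool, ωM v :=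
            Finset.sum_add_distrib
        _ = 2 := by rw [hsumP1, hsumM1]; norm_num
    have h6 : ((mPc + mQc) ^ N) ^ 2
        = (∑ v : Fin N → Bool, Real.sqrt (min (ωP v) (ωM v)) * Real.sqrt (max (ωP v) (ωM v))) ^ 2 := by
      rw [← hT, Finset.sum_congr rfl (fun v _ => h2 v)]
    rw [h6]
    refine le_trans h1 ?_
    rw [Finset.sum_congr rfl (fun v _ => h3 v), Finset.sum_congr rfl (fun v _ => h4 v)]
    have hmin0 : 0 ≤ ∑ v : Fin N → Bool, min (ωP v) (ωM v) :=
      Finset.sum_nonneg (fun v _ => le_min (hωP0 v) (hωM0 v))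
    exact mul_le_mul_of_nonneg_left h5 hmin0
  -- lower bound on mPc + mQc
  have hBC1 : ρ - δ ^ 2 / (2 * pM) ≤ mPc := by
    have hd4 : δ ≤ 4 * pM := by rw [hpMdef]; linarith only [hδρ, hδ0]
    have hH := sqrt_helper hpM0 hδ0.le hd4
    have he : (pM + 2 * δ) * pM = pP * pM := by rw [hpPdef, hpMdef]; ring
    have he2 : pM + δ = ρ := by rw [hpMdef]; ring
    rw [he, he2] at hH
    exact hH
  have hBC2 : (1 - ρ) - δ ^ 2 / (2 * (1 - pP)) ≤ mQc := by
    have hd4 : δ ≤ 4 * (1 - pP) := by rw [hpPdef]; linarith only [hδ1ρ, hδ0]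
    have hH := sqrt_helper h1pP0 hδ0.le hd4
    have he : ((1 - pP) + 2 * δ) * (1 - pP) = (1 - pP) * (1 - pM) := by
      rw [hpPdef, hpMdef]; ring
    have he2 : (1 - pP) + δ = 1 - ρ := by rw [hpPdef]; ring
    rw [he, he2] at hH
    exact hH
  obtain ⟨x, hxdef⟩ : ∃ x : ℝ, x = δ ^ 2 / (2 * pM) + δ ^ 2 / (2 * (1 - pP)) := ⟨_, rfl⟩
  have hx0' : 0 ≤ x := by rw [hxdef]; positivity
  have hδsqN : δ ^ 2 * (N : ℝ) = (1 - ρ) * mn ^ 2 / 16 := by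
    linarith only [hδsq]
  have hmnsq : mn ^ 2 ≤ ρ * (1 - ρ) := by
    have h1 := mul_le_mul hmnρ hmn1ρ hmn0.le hρ0.le
    rw [pow_two]
    linarith only [h1]
  have ht1N : δ ^ 2 / (2 * pM) * (N : ℝ) ≤ 1 / 24 := by
    rw [div_mul_eq_mul_div, div_le_iff₀ (by positivity)]
    -- δ² N ≤ (1/24) (2 pM) = pM/12 ; δ²N = (1-ρ)mn²/16 ≤ ρ/16 ≤ (3ρ/4)/12 ≤ pM/12
    have e1 : (1 - ρ) * mn ^ 2 ≤ 1 * mn ^ 2 :=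
      mul_le_mul_of_nonneg_right (by linarith only [hρ0]) (sq_nonneg mn)
    have e2 : ρ * (1 - ρ) ≤ ρ * 1 :=
      mul_le_mul_of_nonneg_left (by linarith only [hρ0]) hρ0.le
    linarith only [hδsqN, e1, e2, hmnsq, hpM34]
  have ht2N : δ ^ 2 / (2 * (1 - pP)) * (N : ℝ) ≤ 1 / 96 := by
    rw [div_mul_eq_mul_div, div_le_iff₀ (by positivity)]
    -- δ²N = (1-ρ)mn²/16 ≤ (1-ρ)/64 ≤ (1-pP)/48
    have e1 : mn ^ 2 ≤ (1 / 2 : ℝ) ^ 2 := pow_le_pow_left₀ hmn0.le hmnhalf 2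
    have e2 : (1 - ρ) * mn ^ 2 ≤ (1 - ρ) * ((1 / 2 : ℝ) ^ 2) :=
      mul_le_mul_of_nonneg_left e1 h1ρ0.le
    have e3 : (1 - ρ) * ((1 / 2 : ℝ) ^ 2) = (1 - ρ) / 4 := by ring
    linarith only [hδsqN, e2, e3, h1pP]
  have hxN : x * (N : ℝ) ≤ 5 / 96 := by
    rw [hxdef, add_mul]
    linarith only [ht1N, ht2N]
  have hxhalf : x ≤ 1 / 2 := by
    have h1 : x * 1 ≤ x * (N : ℝ) := mul_le_mul_of_nonneg_left hN1 hx0'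
    linarith only [h1, hxN]
  have hBCx : 1 - x ≤ mPc + mQc := by
    rw [hxdef]
    linarith only [hBC1, hBC2]
  -- exp chain
  have hexp1 : Real.exp (-(2 * x)) ≤ 1 - x := exp_le_one_sub hx0' hxhalf
  have hexp0 : 0 < Real.exp (-(2 * x)) := Real.exp_pos _
  have hpow1 : (Real.exp (-(2 * x))) ^ N ≤ (1 - x) ^ N := pow_le_pow_left₀ hexp0.le hexp1 N
  have hpow2 : (1 - x) ^ N ≤ (mPc + mQc) ^ N :=
    pow_le_pow_left₀ (by linarith only [hexp1, hexp0]) hBCx N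
  have hexpN : (Real.exp (-(2 * x))) ^ N = Real.exp ((N : ℝ) * (-(2 * x))) :=
    (Real.exp_nat_mul _ N).symm
  have hexp14 : Real.exp (-(1 / 4 : ℝ)) ≤ Real.exp ((N : ℝ) * (-(2 * x))) := by
    apply Real.exp_le_exp.2
    rw [show (N : ℝ) * (-(2 * x)) = -(2 * (x * (N : ℝ))) by ring]
    linarith only [hxN]
  have hTlow : Real.exp (-(1 / 4 : ℝ)) ≤ (mPc + mQc) ^ N := by
    calc Real.exp (-(1 / 4 : ℝ)) ≤ Real.exp ((N : ℝ) * (-(2 * x))) := hexp14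
      _ = (Real.exp (-(2 * x))) ^ N := hexpN.symm
      _ ≤ (1 - x) ^ N := hpow1
      _ ≤ (mPc + mQc) ^ N := hpow2
  have hminlow : Real.exp (-(1 / 2 : ℝ)) / 2 ≤ ∑ v : Fin N → Bool, min (ωP v) (ωM v) := by
    have h1 : (Real.exp (-(1 / 4 : ℝ))) ^ 2 ≤ ((mPc + mQc) ^ N) ^ 2 :=
      pow_le_pow_left₀ (Real.exp_pos _).le hTlow 2
    have h2 : (Real.exp (-(1 / 4 : ℝ))) ^ 2 = Real.exp (-(1 / 2 : ℝ)) := by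
      rw [← Real.exp_nat_mul]
      norm_num
    linarith only [h1, h2, hCS]
  -- boundary-mass conditions
  have hIio : ∀ p' : ℝ, 0 ≤ p' → ((tp p' x0 M) (Iio lam)).toReal = p' := by
    intro p' hp'
    rw [tp_apply]
    rw [Set.indicator_of_mem (Set.mem_Iio.2 C.hx0lam)]
    rw [Set.indicator_of_notMem (by
      simp only [Set.mem_Iio, not_lt]
      linarith [C.hM] : M ∉ Iio lam)]
    simp [ENNReal.toReal_ofReal hp']
  have hconP : |((tp pP x0 M) (Iio lam)).toReal - ρ| ≤ sr / (4 * sqN) := by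
    rw [hIio pP hpP0, hpPdef, show ρ + δ - ρ = δ by ring, abs_of_pos hδ0]
    exact hδmax
  have hconM : |((tp pM x0 M) (Iio lam)).toReal - ρ| ≤ sr / (4 * sqN) := by
    rw [hIio pM hpM0.le, hpMdef, show ρ - δ - ρ = -δ by ring, abs_neg, abs_of_pos hδ0]
    exact hδmax
  -- upper bound on every element of the set
  have hLb : ∀ G : Measure ℝ, G ∈ GoodDist ρ M →
      (∫ d, (Regret b h ρ M G lam (π fun i => min (d i) lam)
        - Risk b h ρ M G lam) ∂(iidPi N G)) ≤ 2 * ((b + h) * M) := by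
    intro G hG
    haveI hGp : IsProbabilityMeasure G := hG.1
    rw [iidPi_eq_pi G inferInstance]
    haveI : IsProbabilityMeasure (Measure.pi fun _ : Fin N => G) := inferInstance
    have hM0 : (0:ℝ) ≤ M := by linarith
    by_cases hint : Integrable (fun d : Fin N → ℝ =>
        Regret b h ρ M G lam (π fun i => min (d i) lam) - Risk b h ρ M G lam)
        (Measure.pi fun _ : Fin N => G)
    · have hpt : ∀ d : Fin N → ℝ,
          Regret b h ρ M G lam (π fun i => min (d i) lam) - Risk b h ρ M G lam
            ≤ 2 * ((b + h) * M) := by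
        intro d
        have h1 := regret_le (G := G) (lam := lam) hb.le hh.le hρ0
          (hrange (fun i => min (d i) lam))
        have h2 := risk_ge (G := G) (lam := lam) hb.le hh.le hρ0 hM0
        linarith only [h1, h2]
      calc ∫ d, (Regret b h ρ M G lam (π fun i => min (d i) lam)
            - Risk b h ρ M G lam) ∂(Measure.pi fun _ : Fin N => G)
          ≤ ∫ _d, 2 * ((b + h) * M) ∂(Measure.pi fun _ : Fin N => G) :=
            integral_mono hint (integrable_const _) hpt
        _ = 2 * ((b + h) * M) := by simp [measure_univ]
    · rw [integral_undef hint]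
      positivity
  have hbdd : BddAbove {r : ℝ | ∃ G ∈ GoodDist ρ M,
      |(G (Iio lam)).toReal - ρ| ≤ sr / (4 * sqN) ∧
      r = ∫ d, (Regret b h ρ M G lam (π fun i => min (d i) lam)
        - Risk b h ρ M G lam) ∂(iidPi N G)} := by
    refine ⟨2 * ((b + h) * M), ?_⟩
    rintro r ⟨G, hG, _, rfl⟩
    exact hLb G hG
  have hfin1 : EP ≤ sSup {r : ℝ | ∃ G ∈ GoodDist ρ M,
      |(G (Iio lam)).toReal - ρ| ≤ sr / (4 * sqN) ∧
      r = ∫ d, (Regret b h ρ M G lam (π fun i => min (d i) lam)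
        - Risk b h ρ M G lam) ∂(iidPi N G)} :=
    le_csSup hbdd ⟨tp pP x0 M, C.good_high hpPρ hpP1, hconP, hEPdef⟩
  have hfin2 : EM ≤ sSup {r : ℝ | ∃ G ∈ GoodDist ρ M,
      |(G (Iio lam)).toReal - ρ| ≤ sr / (4 * sqN) ∧
      r = ∫ d, (Regret b h ρ M G lam (π fun i => min (d i) lam)
        - Risk b h ρ M G lam) ∂(iidPi N G)} :=
    le_csSup hbdd ⟨tp pM x0 M, C.good_low hpMρ hpM0.le, hconM, hEMdef⟩
  have hEsum : (s * lam / 2) * (Real.exp (-(1 / 2 : ℝ)) / 2) ≤ EP + EM := by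
    have h1 : (s * lam / 2) * (Real.exp (-(1 / 2 : ℝ)) / 2)
        ≤ (s * lam / 2) * ∑ v : Fin N → Bool, min (ωP v) (ωM v) :=
      mul_le_mul_of_nonneg_left hminlow (by positivity)
    calc (s * lam / 2) * (Real.exp (-(1 / 2 : ℝ)) / 2)
        ≤ (s * lam / 2) * ∑ v : Fin N → Bool, min (ωP v) (ωM v) := h1
      _ = (∑ v : Fin N → Bool, min (ωP v) (ωM v)) * (s * lam / 2) := mul_comm _ _
      _ ≤ EP + EM := hsum1
  have heq : lam * (b + h) * sr * mn * Real.exp (-(1 / 2 : ℝ)) / (32 * sqN)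
      = (s * lam / 2) * (Real.exp (-(1 / 2 : ℝ)) / 2) / 2 := by
    rw [hsdef, hδdef]
    field_simp
    ring
  rw [heq]
  linarith only [hfin1, hfin2, hEsum]
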